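/- Let n ≥ 1 be an integer, ε > 0, and 0 < δ < 1/(2(1+ε)). In ℝ³, for 0 ≤ i ≤ n let v_i be the closed segment from (i, 0, 0) to (i, n, 0), and for 0 ≤ j ≤ n let h_j be the closed segment from (0, j, δ) to (n, j, δ); let S = {v_0,…,v_n} ∪ {h_0,…,h_n}. Then for every integer i with 0 ≤ i ≤ n and every odd integer j with 1 ≤ j ≤ 2n−1, the point q = (i, j/2, δ) satisfies dist(q, v_i) = δ and dist(q, s) ≥ 1/2 for every segment s ∈ S with s ≠ v_i; consequently, (1+ε)·dist(q, v_i) < dist(q, s) for every s ∈ S with s ≠ v_i, so v_i is the unique (1+ε)-approximate nearest segment of q. -/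

import Mathlib

noncomputable section

/-- The point `(x, y, z)` of `ℝ³` as an element of `EuclideanSpace ℝ (Fin 3)`. -/
def pt3 (x y z : ℝ) : EuclideanSpace ℝ (Fin 3) :=
  (WithLp.equiv 2 (Fin 3 → ℝ)).symm ![x, y, z]

/-- The "vertical" segment `v_i` from `(i, 0, 0)` to `(i, n, 0)`. -/
def vseg (n i : ℕ) : Set (EuclideanSpace ℝ (Fin 3)) :=
  segment ℝ (pt3 i 0 0) (pt3 i n 0)

/-- The "horizontal" segment `h_j` from `(0, j, δ)` to `(n, j, δ)`. -/
def hseg (n : ℕ) (δ : ℝ) (j : ℕ) : Set (EuclideanSpace ℝ (Fin 3)) :=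
  segment ℝ (pt3 0 j δ) (pt3 n j δ)

/-- The griddle-like family `S = {v_0, …, v_n} ∪ {h_0, …, h_n}`. -/
def gridFam (n : ℕ) (δ : ℝ) : Set (Set (EuclideanSpace ℝ (Fin 3))) :=
  {s | ∃ i ≤ n, s = vseg n i} ∪ {s | ∃ j ≤ n, s = hseg n δ j}

lemma dist_pt3 (x y z x' y' z' : ℝ) :
    dist (pt3 x y z) (pt3 x' y' z') = Real.sqrt ((x-x')^2+(y-y')^2+(z-z')^2) := by
  rw [EuclideanSpace.dist_eq]
  congr 1
  rw [Fin.sum_univ_three]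
  simp [pt3, Real.dist_eq, sq_abs]

lemma combo_pt3 (t x y z x' y' z' : ℝ) :
    (1-t) • pt3 x y z + t • pt3 x' y' z' =
      pt3 ((1-t)*x+t*x') ((1-t)*y+t*y') ((1-t)*z+t*z') := by
  ext k
  fin_cases k <;>
    simp [pt3, PiLp.add_apply, PiLp.smul_apply]

open Metric in
lemma le_infDist_of {E : Type*} [MetricSpace E] {s : Set E} {x : E} {c : ℝ}
    (hs : s.Nonempty) (hc : 0 ≤ c) (h : ∀ y ∈ s, c ≤ dist x y) : c ≤ infDist x s := by
  have h1 : ENNReal.ofReal c ≤ EMetric.infEdist x s :=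
    EMetric.le_infEdist.2 fun y hy => by
      rw [edist_dist]; exact ENNReal.ofReal_le_ofReal (h y hy)
  calc c = (ENNReal.ofReal c).toReal := (ENNReal.toReal_ofReal hc).symm
    _ ≤ (EMetric.infEdist x s).toReal := ENNReal.toReal_mono (infEdist_ne_top hs) h1

lemma infDist_seg_ge (c : ℝ) (hc : 0 ≤ c) (q a b : EuclideanSpace ℝ (Fin 3))
    (h : ∀ t ∈ Set.Icc (0:ℝ) 1, c ≤ dist q ((1-t)•a + t•b)) :
    c ≤ Metric.infDist q (segment ℝ a b) := by
  apply le_infDist_of ⟨a, left_mem_segment ℝ a b⟩ hc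
  intro y hy
  rw [segment_eq_image ℝ a b] at hy
  obtain ⟨t, ht, rfl⟩ := hy
  exact h t ht

/-- **Lower-bound construction.** For `0 < δ < 1/(2(1+ε))`, every
query point `q = (i, j/2, δ)` with `0 ≤ i ≤ n` and odd `1 ≤ j ≤ 2n−1` is at
distance exactly `δ` from `v_i` and at distance at least `1/2` from every other
segment of `S`; consequently `(1+ε)·dist(q, v_i) < dist(q, s)` for every
`s ∈ S` with `s ≠ v_i`, so `v_i` is the unique `(1+ε)`-approximate nearest
segment of `q`. -/
theorem griddle_lower_bound_queries (n : ℕ) (hn : 1 ≤ n)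
    (ε δ : ℝ) (hε : 0 < ε) (hδ0 : 0 < δ) (hδ : δ < 1 / (2 * (1 + ε)))
    (i j : ℕ) (hi : i ≤ n) (hj1 : 1 ≤ j) (hj2 : j ≤ 2 * n - 1) (hjodd : Odd j) :
    Metric.infDist (pt3 i ((j : ℝ) / 2) δ) (vseg n i) = δ ∧
    (∀ s ∈ gridFam n δ, s ≠ vseg n i →
      (1 : ℝ) / 2 ≤ Metric.infDist (pt3 i ((j : ℝ) / 2) δ) s) ∧
    (∀ s ∈ gridFam n δ, s ≠ vseg n i →
      (1 + ε) * Metric.infDist (pt3 i ((j : ℝ) / 2) δ) (vseg n i) <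
        Metric.infDist (pt3 i ((j : ℝ) / 2) δ) s) := by
  set q := pt3 i ((j : ℝ) / 2) δ with hq
  have hn0 : (0:ℝ) < n := by exact_mod_cast hn
  have hj2n : j < 2 * n := by omega
  have hj2n' : (j:ℝ) < 2 * n := by exact_mod_cast hj2n
  have hjpos : (0:ℝ) < j := by exact_mod_cast hj1
  -- Part A
  have hA : Metric.infDist q (vseg n i) = δ := by
    apply le_antisymm
    · -- upper bound via the point pt3 i (j/2) 0
      have hmem : pt3 i ((j:ℝ)/2) 0 ∈ vseg n i := by
        rw [vseg, segment_eq_image ℝ]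
        refine ⟨(j:ℝ)/(2*n), ⟨by positivity, by
          rw [div_le_one (by positivity)]; linarith⟩, ?_⟩
        dsimp only
        have hne : (n:ℝ) ≠ 0 := hn0.ne'
        rw [combo_pt3,
          show ((1-(j:ℝ)/(2*n))*i + (j:ℝ)/(2*n)*i : ℝ) = i by ring,
          show ((1-(j:ℝ)/(2*n))*0 + (j:ℝ)/(2*n)*n : ℝ) = (j:ℝ)/2 by field_simp; ring,
          show ((1-(j:ℝ)/(2*n))*0 + (j:ℝ)/(2*n)*0 : ℝ) = 0 by ring]
      calc Metric.infDist q (vseg n i) ≤ dist q (pt3 i ((j:ℝ)/2) 0) :=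
            Metric.infDist_le_dist_of_mem hmem
        _ = δ := by
            rw [hq, dist_pt3]
            simp only [sub_self, sub_zero]
            rw [show ((0:ℝ)^2 + 0^2 + δ^2) = δ^2 by ring, Real.sqrt_sq hδ0.le]
    · apply infDist_seg_ge δ hδ0.le
      intro t ht
      rw [combo_pt3, hq, dist_pt3]
      rw [Real.le_sqrt' hδ0]
      nlinarith [sq_nonneg ((j:ℝ)/2 - ((1-t)*0 + t*n)), sq_nonneg ((i:ℝ) - ((1-t)*i + t*i))]
  have hB : ∀ s ∈ gridFam n δ, s ≠ vseg n i →
      (1 : ℝ) / 2 ≤ Metric.infDist q s := by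
    rintro s (⟨i', hi', rfl⟩ | ⟨j', hj', rfl⟩) hne
    · have hii : i' ≠ i := fun h => hne (by rw [h])
      have h1 : (1:ℝ) ≤ ((i:ℝ) - i')^2 := by
        have hz : (i:ℤ) - i' ≠ 0 := by
          intro h; exact hii (by omega)
        have h1 : (1:ℤ) ≤ |(i:ℤ) - i'| := Int.one_le_abs hz
        have h2 : (1:ℝ) ≤ |(i:ℝ) - i'| := by exact_mod_cast h1
        nlinarith [sq_abs ((i:ℝ) - i')]
      apply infDist_seg_ge _ (by norm_num)
      intro t ht
      rw [combo_pt3, hq, dist_pt3]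
      rw [Real.le_sqrt' (by norm_num)]
      nlinarith [sq_nonneg ((j:ℝ)/2 - ((1-t)*0 + t*n)), sq_nonneg δ]
    · have h1 : (1:ℝ) ≤ ((j:ℝ) - 2*j')^2 := by
        have hz : (j:ℤ) - 2*j' ≠ 0 := by
          intro h
          have : j = 2 * j' := by omega
          rw [this] at hjodd
          exact (Nat.not_odd_iff_even.2 ⟨j', by ring⟩) hjodd
        have h1 : (1:ℤ) ≤ |(j:ℤ) - 2*j'| := Int.one_le_abs hz
        have h2 : (1:ℝ) ≤ |(j:ℝ) - 2*j'| := by exact_mod_cast h1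
        nlinarith [sq_abs ((j:ℝ) - 2*j')]
      apply infDist_seg_ge _ (by norm_num)
      intro t ht
      rw [combo_pt3, hq, dist_pt3]
      rw [Real.le_sqrt' (by norm_num)]
      nlinarith [sq_nonneg ((i:ℝ) - ((1-t)*0 + t*n)), sq_nonneg (δ - ((1-t)*δ + t*δ))]
  refine ⟨hA, hB, fun s hs hne => ?_⟩
  have h1 : (1+ε) * δ < 1/2 := by
    have h2 : (0:ℝ) < 2 * (1 + ε) := by linarith
    calc (1+ε) * δ < (1+ε) * (1 / (2 * (1+ε))) := by
          apply mul_lt_mul_of_pos_left hδ (by linarith)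
      _ = 1/2 := by field_simp
  rw [hA]
  exact lt_of_lt_of_le h1 (hB s hs hne)
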